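/- With B̄^B_{r,s}(x,z) the homogenization of the type-B Bernoulli-like polynomial, for any ε ∈ {-1, 0, 1}: B̄^B_{r,s}(x_p, z) + ε B̄^B_{r,s}(x_q, z) ≡ (x_p + ε x_q) · ((x_p^r - (ε x_q)^r)/(x_p - ε x_q)) · (x_p · ε x_q)^s modulo the ideal generated by (x_p + ε x_q - z) in R[x_p, x_q, z], where (x_p^r - (ε x_q)^r)/(x_p - ε x_q) denotes the polynomial Σ_{i=0}^{r-1} x_p^{r-1-i} (ε x_q)^i. -/

import Mathlib

open Polynomial

set_option maxHeartbeats 2000000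

private theorem aux_periodic (D : ℝ[X]) (h : D.comp (X + 1) = D) (h0 : D.eval 0 = 0) :
    D = 0 := by
  have hn : ∀ n : ℕ, D.eval (n : ℝ) = 0 := by
    intro n
    induction n with
    | zero => simpa using h0
    | succ k ih =>
      have := congrArg (Polynomial.eval (k : ℝ)) h
      rw [eval_comp] at this
      simp at this
      rw [← ih, ← this]
      norm_num
  have : Set.Infinite {x : ℝ | D.IsRoot x} := by
    apply Set.Infinite.mono (s := Set.range ((↑) : ℕ → ℝ))
    · rintro x ⟨n, rfl⟩; exact hn n
    · exact Set.infinite_range_of_injective Nat.cast_injective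
  exact Polynomial.eq_zero_of_infinite_isRoot D this

private theorem aux_odd (r s : ℕ) (Q B : ℝ[X])
    (hQ : (2 * X + 1) * Q = (X + 1) ^ r - (-X) ^ r)
    (hB : B.comp (X + 1) - B = Q * (X + 1) ^ s * (-X) ^ s)
    (hB0 : B.eval 0 = 0) : B.comp (-X) = -B := by
  have h2X : (2 * X + 1 : ℝ[X]) ≠ 0 := by
    intro h; have := congrArg (Polynomial.eval 0) h; simp at this
  have hQodd : Q.comp (-(X+1)) = Q := by
    have h1 := congrArg (fun p => p.comp (-(X+1) : ℝ[X])) hQ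
    simp only [mul_comp, sub_comp, pow_comp, add_comp, X_comp, one_comp, neg_comp,
      ofNat_comp] at h1
    apply mul_left_cancel₀ h2X
    rw [hQ]
    linear_combination -h1
  have hg : (Q * (X+1)^s * (-X)^s).comp (-(X+1)) = Q * (X+1)^s * (-X)^s := by
    simp only [mul_comp, pow_comp, add_comp, X_comp, one_comp, neg_comp, hQodd]
    ring
  have hBc := congrArg (fun p => p.comp (-(X+1) : ℝ[X])) hB
  simp only [sub_comp, hg] at hBc
  have e1 : (B.comp (X+1)).comp (-(X+1)) = B.comp (-X) := by
    rw [comp_assoc]; congr 1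
    simp only [add_comp, X_comp, one_comp]; ring
  rw [e1] at hBc
  have hD : (B + B.comp (-X)).comp (X + 1) = B + B.comp (-X) := by
    have e2 : (B.comp (-X)).comp (X+1) = B.comp (-(X+1)) := by
      rw [comp_assoc]; congr 1
      simp only [neg_comp, X_comp]
    rw [add_comp, e2]
    linear_combination hB - hBc
  have hD0 : (B + B.comp (-X)).eval 0 = 0 := by
    simp [eval_comp, hB0]
  have := aux_periodic _ hD hD0
  linear_combination this

private theorem aux_deg (r s : ℕ) (hr : 0 < r) (Q B : ℝ[X])
    (hQ : (2 * X + 1) * Q = (X + 1) ^ r - (-X) ^ r)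
    (hB : B.comp (X + 1) - B = Q * (X + 1) ^ s * (-X) ^ s) :
    B.natDegree ≤ r + 2 * s := by
  have h2X : (2 * X + 1 : ℝ[X]) ≠ 0 := by
    intro h; have := congrArg (Polynomial.eval 0) h; simp at this
  have hnQ : Q.natDegree ≤ r - 1 := by
    rcases eq_or_ne Q 0 with h | h
    · simp [h]
    · have h1 : ((2 * X + 1 : ℝ[X]) * Q).natDegree = 1 + Q.natDegree := by
        rw [natDegree_mul h2X h]
        congr 1
        compute_degree!
      have h2 : (((X + 1) ^ r - (-X) ^ r : ℝ[X])).natDegree ≤ r := by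
        apply le_trans (natDegree_sub_le _ _)
        have hX1 : (X + 1 : ℝ[X]).natDegree = 1 := by compute_degree!
        have e1 : ((X + 1 : ℝ[X]) ^ r).natDegree ≤ r := by
          apply le_trans (natDegree_pow_le); simp [hX1]
        have e2 : ((-X : ℝ[X]) ^ r).natDegree ≤ r := by
          apply le_trans (natDegree_pow_le)
          rw [natDegree_neg, natDegree_X]; omega
        omega
      rw [← hQ, h1] at h2
      omega
  have hng : (Q * (X+1)^s * (-X)^s).natDegree ≤ (r - 1) + s + s := by
    apply le_trans (natDegree_mul_le)
    have : ((-X : ℝ[X])^s).natDegree ≤ s := by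
      apply le_trans (natDegree_pow_le); rw [natDegree_neg, natDegree_X]; omega
    have h2 : (Q * (X+1)^s : ℝ[X]).natDegree ≤ (r-1) + s := by
      apply le_trans (natDegree_mul_le)
      have hX1 : (X + 1 : ℝ[X]).natDegree = 1 := by compute_degree!
      have : ((X+1 : ℝ[X])^s).natDegree ≤ s := by
        apply le_trans (natDegree_pow_le); simp [hX1]
      omega
    omega
  rcases Nat.eq_zero_or_pos B.natDegree with h | h
  · omega
  obtain ⟨m, hm⟩ : ∃ m, B.natDegree = m + 1 := ⟨B.natDegree - 1, by omega⟩
  have hBne : B ≠ 0 := fun hB0 => by simp [hB0] at hm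
  have hcoeff : (B.comp (X+1) - B).coeff m = (m+1 : ℝ) * B.coeff (m+1) := by
    have hcomp : B.comp (X+1) = ∑ i ∈ Finset.range (m+2), C (B.coeff i) * (X+1:ℝ[X])^i := by
      conv_lhs => rw [B.as_sum_range' (m+2) (by omega)]
      simp [eval₂_finset_sum, Polynomial.comp]
    rw [coeff_sub, hcomp, finset_sum_coeff]
    simp only [coeff_C_mul, coeff_X_add_one_pow]
    rw [Finset.sum_range_succ, Finset.sum_range_succ]
    rw [Finset.sum_eq_zero (fun i hi => by
      simp only [Finset.mem_range] at hi
      rw [Nat.choose_eq_zero_of_lt hi, Nat.cast_zero, mul_zero])]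
    simp [Nat.choose_succ_self_right]
    ring
  have hne : (B.comp (X+1) - B).coeff m ≠ 0 := by
    rw [hcoeff]
    have hc : B.coeff (m+1) ≠ 0 := by
      rw [← hm]; exact mt Polynomial.leadingCoeff_eq_zero.mp hBne
    positivity
  have : m ≤ (Q * (X+1)^s * (-X)^s).natDegree := by
    apply le_natDegree_of_ne_zero
    rw [← hB]; exact hne
  omega

private theorem aux_homsum {K : Type*} [Field K] [Algebra ℝ K] (P : ℝ[X]) {n : ℕ}
    (hP : P.natDegree ≤ n) (a b : K) (hb : b ≠ 0) :
    ∑ i ∈ Finset.range (n+1), algebraMap ℝ K (P.coeff i) * a^i * b^(n-i)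
      = b^n * Polynomial.aeval (a * b⁻¹) P := by
  rw [Polynomial.aeval_eq_sum_range' (Nat.lt_succ_of_le hP) (a * b⁻¹), Finset.mul_sum]
  apply Finset.sum_congr rfl
  intro i hi
  rw [Finset.mem_range] at hi
  rw [Algebra.smul_def, mul_pow]
  have : b ^ n = b ^ i * b ^ (n - i) := by rw [← pow_add]; congr 1; omega
  rw [this]
  field_simp
  rw [mul_assoc _ (b ^ i), ← mul_pow, mul_one_div_cancel hb, one_pow, mul_one]

private theorem aux_key {K : Type*} [Field K] [Algebra ℝ K] (r s : ℕ) (Q B : ℝ[X])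
    (hQ : (2 * X + 1) * Q = (X + 1) ^ r - (-X) ^ r)
    (hB : B.comp (X + 1) - B = Q * (X + 1) ^ s * (-X) ^ s)
    (x y w : K) (hw : w = x - y) (hw0 : w ≠ 0) (hxy : x + y ≠ 0) :
    w ^ (r+2*s) * Polynomial.aeval (x * w⁻¹) B - w ^ (r+2*s) * Polynomial.aeval (y * w⁻¹) B
      = w * (∑ i ∈ Finset.range r, x ^ (r-1-i) * (-y) ^ i) * (x * -y) ^ s := by
  obtain ⟨u, hu⟩ : ∃ u, u = x * w⁻¹ := ⟨_, rfl⟩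
  obtain ⟨v, hv⟩ : ∃ v, v = y * w⁻¹ := ⟨_, rfl⟩
  rw [← hu, ← hv]
  have hx : x = u * w := by rw [hu]; field_simp
  have hy : y = v * w := by rw [hv]; field_simp
  have huv : u - v = 1 := by
    rw [hu, hv]; field_simp; linear_combination -hw
  have hQv : (2 * v + 1) * Polynomial.aeval v Q = (v+1)^r - (-v)^r := by
    have h0 := congrArg (Polynomial.aeval v) hQ
    simp only [map_mul, map_add, map_sub, map_pow, map_one, map_neg, map_ofNat,
      Polynomial.aeval_X] at h0
    exact h0
  have hBv : Polynomial.aeval (v+1) B - Polynomial.aeval v B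
      = Polynomial.aeval v Q * (v+1)^s * (-v)^s := by
    have := congrArg (Polynomial.aeval v) hB
    simpa [Polynomial.aeval_comp] using this
  have huv1 : u = v + 1 := by linear_combination huv
  rw [← huv1] at hQv hBv
  rw [hx, hy]
  have hxy' : u * w + v * w ≠ 0 := by rw [← hx, ← hy]; exact hxy
  have hG : (∑ i ∈ Finset.range r, (u*w) ^ (r-1-i) * (-(v*w)) ^ i) * ((u*w) + (v*w))
      = (u*w)^r - (-(v*w))^r := by
    have h1 := geom_sum₂_mul (R := K) (-(v*w)) (u*w) r
    have h2 : (∑ i ∈ Finset.range r, (-(v*w))^i * (u*w)^(r-1-i))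
        = ∑ i ∈ Finset.range r, (u*w) ^ (r-1-i) * (-(v*w)) ^ i :=
      Finset.sum_congr rfl (fun i _ => mul_comm _ _)
    rw [h2] at h1
    linear_combination -h1
  apply mul_left_cancel₀ hxy'
  linear_combination (u * w + v * w) * w^(r+2*s) * hBv
    + w^(r+2*s+1) * u^s * (-v)^s * hQv
    + w^(r+2*s+1) * (Polynomial.aeval v Q) * u^s * (-v)^s * huv
    - w * ((u*w) * -(v*w))^s * hG

/-- With B̄^B_{r,s}(x,z) the homogenization of the type-B Bernoulli-like polynomial,
for ε ∈ {-1,0,1}: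
B̄^B(x_p,z) + ε B̄^B(x_q,z) ≡ (x_p + ε x_q)·(Σ_{i<r} x_p^{r-1-i}(ε x_q)^i)·(x_p·ε x_q)^s
modulo the ideal (x_p + ε x_q - z).  Variables: X 0 = x_p, X 1 = x_q, X 2 = z. -/
theorem stmt10 (r s : ℕ) (hr : 0 < r) (Q B : ℝ[X])
    (hQ : (2 * X + 1) * Q = (X + 1) ^ r - (-X) ^ r)
    (hB : B.comp (X + 1) - B = Q * (X + 1) ^ s * (-X) ^ s)
    (hB0 : B.eval 0 = 0)
    (ε : ℝ) (hε : ε = -1 ∨ ε = 0 ∨ ε = 1) :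
    ((∑ i ∈ Finset.range (r + 2 * s + 1),
        MvPolynomial.C (B.coeff i) * MvPolynomial.X 0 ^ i
          * MvPolynomial.X 2 ^ (r + 2 * s - i))
      + MvPolynomial.C ε * (∑ i ∈ Finset.range (r + 2 * s + 1),
        MvPolynomial.C (B.coeff i) * MvPolynomial.X 1 ^ i
          * MvPolynomial.X 2 ^ (r + 2 * s - i)))
      - (MvPolynomial.X 0 + MvPolynomial.C ε * MvPolynomial.X 1)
          * (∑ i ∈ Finset.range r,
              MvPolynomial.X 0 ^ (r - 1 - i) * (MvPolynomial.C ε * MvPolynomial.X 1) ^ i)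
          * (MvPolynomial.X 0 * (MvPolynomial.C ε * MvPolynomial.X 1)) ^ s
      ∈ Ideal.span {(MvPolynomial.X 0 + MvPolynomial.C ε * MvPolynomial.X 1
          - MvPolynomial.X 2 : MvPolynomial (Fin 3) ℝ)} := by
  classical
  set W : MvPolynomial (Fin 3) ℝ := MvPolynomial.X 0 + MvPolynomial.C ε * MvPolynomial.X 1
    with hW
  set v : Fin 3 → MvPolynomial (Fin 3) ℝ := fun i => if i = 2 then W else MvPolynomial.X i
    with hvdef
  set φ : MvPolynomial (Fin 3) ℝ →ₐ[ℝ] MvPolynomial (Fin 3) ℝ := MvPolynomial.aeval v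
    with hφdef
  have hv0 : φ (MvPolynomial.X 0) = MvPolynomial.X 0 := by
    rw [hφdef, MvPolynomial.aeval_X]; rfl
  have hv1 : φ (MvPolynomial.X 1) = MvPolynomial.X 1 := by
    rw [hφdef, MvPolynomial.aeval_X]; rfl
  have hv2 : φ (MvPolynomial.X 2) = W := by
    rw [hφdef, MvPolynomial.aeval_X]; rfl
  have hvC : ∀ a : ℝ, φ (MvPolynomial.C a) = MvPolynomial.C a := by
    intro a; rw [hφdef, MvPolynomial.aeval_C, MvPolynomial.algebraMap_eq]
  have hmem : ∀ p : MvPolynomial (Fin 3) ℝ, p - φ p ∈ Ideal.span {W - MvPolynomial.X 2} := by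
    intro p
    induction p using MvPolynomial.induction_on with
    | C a => rw [hvC, sub_self]; exact zero_mem _
    | add p q hp hq =>
      rw [map_add]
      have : p + q - (φ p + φ q) = (p - φ p) + (q - φ q) := by ring
      rw [this]; exact add_mem hp hq
    | mul_X p i hp =>
      have : p * MvPolynomial.X i - φ (p * MvPolynomial.X i)
          = (p - φ p) * MvPolynomial.X i + φ p * (MvPolynomial.X i - φ (MvPolynomial.X i)) := by
        rw [map_mul]; ring
      rw [this]
      apply add_mem (Ideal.mul_mem_right _ _ hp)
      apply Ideal.mul_mem_left
      have hXi : φ (MvPolynomial.X i) = v i := by rw [hφdef, MvPolynomial.aeval_X]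
      by_cases h2 : i = 2
      · subst h2
        rw [hXi, show v 2 = W from rfl]
        have : MvPolynomial.X 2 - W = -(W - MvPolynomial.X 2) := by ring
        rw [this]
        exact neg_mem (Ideal.subset_span rfl)
      · rw [hXi, show v i = if i = 2 then W else MvPolynomial.X i from rfl, if_neg h2,
          sub_self]
        exact zero_mem _
  have main : ∀ p : MvPolynomial (Fin 3) ℝ, φ p = 0 →
      p ∈ Ideal.span {W - MvPolynomial.X 2} := by
    intro p hp
    have := hmem p
    rwa [hp, sub_zero] at this
  apply main
  simp only [map_sub, map_add, map_mul, map_pow, map_sum, hv0, hv1, hv2, hvC]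
  have hinj := IsFractionRing.injective (MvPolynomial (Fin 3) ℝ)
    (FractionRing (MvPolynomial (Fin 3) ℝ))
  apply hinj
  rw [map_zero]
  set j := algebraMap (MvPolynomial (Fin 3) ℝ) (FractionRing (MvPolynomial (Fin 3) ℝ)) with hj
  have hC : ∀ a : ℝ, j (MvPolynomial.C a)
      = algebraMap ℝ (FractionRing (MvPolynomial (Fin 3) ℝ)) a := by
    intro a
    rw [hj, ← MvPolynomial.algebraMap_eq, ← IsScalarTower.algebraMap_apply]
  simp only [hW, map_sub, map_add, map_mul, map_pow, map_sum, hC]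
  set x := j (MvPolynomial.X 0) with hx
  set y := j (MvPolynomial.X 1) with hy
  have hzero : ∀ p : MvPolynomial (Fin 3) ℝ,
      (MvPolynomial.eval ![1,0,0] p ≠ 0) → j p ≠ 0 := by
    intro p hp h0
    apply hp
    have hp0 : p = 0 := hinj (by rwa [map_zero])
    rw [hp0, map_zero]
  have hx0 : x ≠ 0 := hzero _ (by simp)
  have hxysub : x - y ≠ 0 := by
    rw [hx, hy, ← map_sub]
    exact hzero _ (by simp)
  have hxyadd : x + y ≠ 0 := by
    rw [hx, hy, ← map_add]
    exact hzero _ (by simp)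
  have hdeg : B.natDegree ≤ r + 2 * s := aux_deg r s hr Q B hQ hB
  rcases hε with h | h | h <;> subst h
  · -- ε = -1
    simp only [map_neg, map_one, neg_one_mul, hv0, hv1]
    have hw0 : x + -y ≠ 0 := by rw [← sub_eq_add_neg]; exact hxysub
    rw [aux_homsum B hdeg x (x + -y) hw0, aux_homsum B hdeg y (x + -y) hw0]
    have hk := aux_key r s Q B hQ hB x y (x + -y) (by ring) hw0 hxyadd
    linear_combination hk
  · -- ε = 0
    simp only [map_zero, zero_mul, mul_zero, add_zero, zero_add, hv0, hv1]
    rw [aux_homsum B hdeg x x hx0, mul_inv_cancel₀ hx0]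
    have hQ0 : Q.eval 0 = 1 := by
      have h0 := congrArg (Polynomial.eval 0) hQ
      simpa [zero_pow hr.ne'] using h0
    have hB1 : B.eval 1 = (0:ℝ)^s := by
      have h0 := congrArg (Polynomial.eval 0) hB
      simpa [eval_comp, hB0, hQ0] using h0
    have haeval1 : Polynomial.aeval (1 : FractionRing (MvPolynomial (Fin 3) ℝ)) B
        = algebraMap ℝ (FractionRing (MvPolynomial (Fin 3) ℝ)) (B.eval 1) := by
      rw [← map_one (algebraMap ℝ (FractionRing (MvPolynomial (Fin 3) ℝ))),
        Polynomial.aeval_algebraMap_apply]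
      simp
    have hsum0 : (∑ i ∈ Finset.range r,
        x^(r-1-i) * (0 : FractionRing (MvPolynomial (Fin 3) ℝ))^i) = x^(r-1) := by
      rw [Finset.sum_eq_single 0]
      · simp
      · intro b _ hb; rw [zero_pow hb, mul_zero]
      · intro h; exact absurd (Finset.mem_range.mpr hr) h
    rw [haeval1, hB1, hsum0]
    rcases Nat.eq_zero_or_pos s with hs | hs
    · subst hs
      simp only [pow_zero, map_one, mul_one, Nat.mul_zero, Nat.add_zero]
      have hrr : r - 1 + 1 = r := by omega
      rw [← pow_succ', hrr, ← hx, sub_self]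
    · rw [zero_pow hs.ne', zero_pow hs.ne']
      simp
  · -- ε = 1
    simp only [map_one, one_mul, hv0, hv1]
    rw [aux_homsum B hdeg x (x + y) hxyadd, aux_homsum B hdeg y (x + y) hxyadd]
    have hoddB : B.comp (-Polynomial.X) = -B := aux_odd r s Q B hQ hB hB0
    have h2 : Polynomial.aeval (y * (x+y)⁻¹) B
        = - Polynomial.aeval ((-y) * (x+y)⁻¹) B := by
      have h3 := congrArg (Polynomial.aeval ((y * (x+y)⁻¹) : FractionRing (MvPolynomial (Fin 3) ℝ))) hoddB
      simp only [Polynomial.aeval_comp, map_neg, Polynomial.aeval_X] at h3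
      rw [show (-y) * (x+y)⁻¹ = -(y * (x+y)⁻¹) by ring, h3, neg_neg]
    have hk := aux_key r s Q B hQ hB x (-y) (x + y) (by ring) hxyadd
      (by rw [show x + -y = x - y by ring]; exact hxysub)
    simp only [neg_neg] at hk
    linear_combination hk + (x+y)^(r+2*s) * h2
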